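/- Let m ≥ 2, t ≥ m and r ≥ t be integers and let 𝓗 be a set of connected m-uniform hypergraphs each having more than t vertices. If there exists an m-(r,t,1) design, then f_m(r, 𝓗) ≤ binom(r−1, m−1)/binom(t−1, m−1). -/

import Mathlib

/-- An `m`-uniform edge set: every edge has exactly `m` vertices. -/
def IsUniform (m : ℕ) {n : ℕ} (E : Finset (Finset (Fin n))) : Prop :=
  ∀ e ∈ E, e.card = m

/-- The hypergraph with edge set `GE` contains a subhypergraph isomorphic to the
hypergraph with edge set `HE`: there is an injection of vertices sending every edge
of `HE` to an edge of `GE`. -/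
def HypContains {n N : ℕ} (HE : Finset (Finset (Fin n))) (GE : Finset (Finset (Fin N))) : Prop :=
  ∃ f : Fin n → Fin N, Function.Injective f ∧ ∀ e ∈ HE, e.image f ∈ GE

/-- The hypergraph with edge set `GE` is an `(r,k)`-hypergraph (`m`-uniform setting):
its vertex set can be partitioned into `r` parts of size at most `k` so that for every
`m`-element set of parts there is an edge meeting each of those parts in exactly one vertex. -/
def IsRKHyper {N : ℕ} (GE : Finset (Finset (Fin N))) (m r k : ℕ) : Prop :=
  ∃ P : Fin r → Finset (Fin N),
    (∀ v : Fin N, ∃! i, v ∈ P i) ∧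
    (∀ i, (P i).card ≤ k) ∧
    ∀ S : Finset (Fin r), S.card = m → ∃ e ∈ GE, ∀ i ∈ S, (e ∩ P i).card = 1

/-- A hypergraph: a number of vertices together with an edge set. -/
abbrev Hyp := (n : ℕ) × Finset (Finset (Fin n))

/-- `f_m(r, ℋ)`: the minimum `k` for which there is an `ℋ`-free `m`-uniform
`(r,k)`-hypergraph. -/
noncomputable def fHyper (m r : ℕ) (ℋ : Set Hyp) : ℕ :=
  sInf {k | ∃ (N : ℕ) (GE : Finset (Finset (Fin N))),
    IsUniform m GE ∧ (∀ H ∈ ℋ, ¬ HypContains H.2 GE) ∧ IsRKHyper GE m r k}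

/-- A hypergraph is connected: any two vertices are joined by a sequence of steps within
common edges. -/
def HypConnected (H : Hyp) : Prop :=
  ∀ u v : Fin H.1, Relation.ReflTransGen (fun x y => ∃ e ∈ H.2, x ∈ e ∧ y ∈ e) u v

/-- An `m`-`(r,t,1)` design: a collection of `t`-element blocks of the point set `Fin r`
such that every `m`-element set of points is contained in exactly one block. -/
def IsDesign (m t : ℕ) {r : ℕ} (B : Finset (Finset (Fin r))) : Prop :=
  (∀ b ∈ B, b.card = t) ∧
  ∀ S : Finset (Fin r), S.card = m → ∃! b, b ∈ B ∧ S ⊆ b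

theorem design_deg (m t r : ℕ) (hm : 2 ≤ m)
    (B : Finset (Finset (Fin r))) (hBt : ∀ b ∈ B, b.card = t)
    (hBu : ∀ S : Finset (Fin r), S.card = m → ∃! b, b ∈ B ∧ S ⊆ b)
    (i : Fin r) :
    (B.filter (fun b => i ∈ b)).card * (t-1).choose (m-1) = (r-1).choose (m-1) := by
  classical
  set A := (Finset.univ.erase i).powersetCard (m-1) with hA
  have hAcard : A.card = (r-1).choose (m-1) := by
    rw [hA, Finset.card_powersetCard, Finset.card_erase_of_mem (Finset.mem_univ i),
      Finset.card_univ, Fintype.card_fin]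
  have hmem : ∀ S ∈ A, S ⊆ Finset.univ.erase i ∧ S.card = m - 1 := by
    intro S hS
    rw [hA, Finset.mem_powersetCard] at hS
    exact hS
  have hins : ∀ S ∈ A, (insert i S).card = m := by
    intro S hS
    obtain ⟨hsub, hc⟩ := hmem S hS
    have : i ∉ S := fun h => (Finset.mem_erase.mp (hsub h)).1 rfl
    rw [Finset.card_insert_of_notMem this, hc]
    omega
  set φ : Finset (Fin r) → Finset (Fin r) := fun S =>
    if h : (insert i S).card = m then (hBu _ h).choose else ∅ with hφ
  have hφ_spec : ∀ S ∈ A, (φ S ∈ B ∧ insert i S ⊆ φ S) ∧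
      ∀ b, (b ∈ B ∧ insert i S ⊆ b) → b = φ S := by
    intro S hS
    have h := hins S hS
    simp only [hφ, dif_pos h]
    exact ⟨(hBu _ h).choose_spec.1, (hBu _ h).choose_spec.2⟩
  have hmaps : ∀ S ∈ A, φ S ∈ B.filter (fun b => i ∈ b) := by
    intro S hS
    obtain ⟨⟨hb, hsub⟩, _⟩ := hφ_spec S hS
    exact Finset.mem_filter.mpr ⟨hb, hsub (Finset.mem_insert_self i S)⟩
  have hcount := Finset.card_eq_sum_card_fiberwise hmaps
  have hfiber : ∀ b ∈ B.filter (fun b => i ∈ b),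
      (A.filter (fun S => φ S = b)).card = (t-1).choose (m-1) := by
    intro b hb
    obtain ⟨hbB, hib⟩ := Finset.mem_filter.mp hb
    have hfeq : A.filter (fun S => φ S = b) = (b.erase i).powersetCard (m-1) := by
      ext S
      rw [Finset.mem_filter]
      constructor
      · rintro ⟨hS, hphi⟩
        obtain ⟨⟨_, hsub⟩, _⟩ := hφ_spec S hS
        obtain ⟨hsub', hc⟩ := hmem S hS
        refine Finset.mem_powersetCard.mpr ⟨fun x hx => Finset.mem_erase.mpr ⟨?_, ?_⟩, hc⟩
        · exact (Finset.mem_erase.mp (hsub' hx)).1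
        · rw [← hphi]; exact hsub (Finset.mem_insert_of_mem hx)
      · intro hmem2
        obtain ⟨hsub, hc⟩ := Finset.mem_powersetCard.mp hmem2
        have hSA : S ∈ A := by
          rw [hA, Finset.mem_powersetCard]
          exact ⟨fun x hx => Finset.mem_erase.mpr ⟨(Finset.mem_erase.mp (hsub hx)).1,
            Finset.mem_univ x⟩, hc⟩
        refine ⟨hSA, ?_⟩
        obtain ⟨_, huniq⟩ := hφ_spec S hSA
        exact (huniq b ⟨hbB, Finset.insert_subset hib
          (fun x hx => (Finset.mem_erase.mp (hsub hx)).2)⟩).symm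
    rw [hfeq, Finset.card_powersetCard, Finset.card_erase_of_mem hib, hBt b hbB]
  rw [hcount, Finset.sum_congr rfl hfiber, Finset.sum_const, smul_eq_mul] at hAcard
  exact hAcard

theorem stmt15 (m t r : ℕ) (hm : 2 ≤ m) (ht : m ≤ t) (hr : t ≤ r) (ℋ : Set Hyp)
    (hconn : ∀ H ∈ ℋ, HypConnected H)
    (huni : ∀ H ∈ ℋ, IsUniform m H.2)
    (hcard : ∀ H ∈ ℋ, t < H.1)
    (hdesign : ∃ B : Finset (Finset (Fin r)), IsDesign m t B) :
    (fHyper m r ℋ : ℝ)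
      ≤ (Nat.choose (r - 1) (m - 1) : ℝ) / (Nat.choose (t - 1) (m - 1) : ℝ) := by
  classical
  obtain ⟨B, hBt, hBu⟩ := hdesign
  have hrpos : 0 < r := by omega
  have hct : 0 < (t-1).choose (m-1) := Nat.choose_pos (by omega)
  set k := (r-1).choose (m-1) / (t-1).choose (m-1) with hk
  have hdeg : ∀ i : Fin r, (B.filter (fun b => i ∈ b)).card = k := by
    intro i
    have h := design_deg m t r hm B hBt hBu i
    exact (Nat.div_eq_of_eq_mul_left hct h.symm).symm
  -- k is positive
  have hkpos : 0 < k := by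
    obtain ⟨S, _, hScard⟩ := Finset.exists_subset_card_eq (s := (Finset.univ : Finset (Fin r))) (n := m)
      (by rw [Finset.card_univ, Fintype.card_fin]; omega)
    obtain ⟨b, ⟨hbB, hSb⟩, -⟩ := hBu S hScard
    have hbne : b.Nonempty := by
      rw [← Finset.card_pos, hBt b hbB]; omega
    obtain ⟨i, hib⟩ := hbne
    have : 0 < (B.filter (fun b => i ∈ b)).card :=
      Finset.card_pos.mpr ⟨b, Finset.mem_filter.mpr ⟨hbB, hib⟩⟩
    rw [hdeg i] at this
    exact this
  -- setup
  set D : Fin r → Finset (Finset (Fin r)) := fun i => B.filter (fun b => i ∈ b) with hD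
  have hDcard : ∀ i, (D i).card = k := hdeg
  set σ : (i : Fin r) → {x // x ∈ D i} ≃ Fin k :=
    fun i => (D i).equivFin.trans (finCongr (hDcard i)) with hσ
  set fe : Fin r × Fin k ≃ Fin (r * k) := finProdFinEquiv with hfe
  set idx : Fin r → Finset (Fin r) → Fin k :=
    fun i b => if h : b ∈ D i then σ i ⟨b, h⟩ else ⟨0, hkpos⟩ with hidx
  set vert : Fin r → Finset (Fin r) → Fin (r * k) := fun i b => fe (i, idx i b) with hvert
  set blk : Fin (r * k) → Finset (Fin r) :=
    fun v => ((σ (fe.symm v).1).symm (fe.symm v).2 : {x // x ∈ D (fe.symm v).1}).1 with hblk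
  have hvinj : ∀ b, Function.Injective (fun i => vert i b) := by
    intro b x y h
    have h2 : (x, idx x b) = (y, idx y b) := fe.injective h
    exact (Prod.mk.injEq _ _ _ _).mp h2 |>.1
  have hsymm_vert : ∀ i b, fe.symm (vert i b) = (i, idx i b) := by
    intro i b; rw [hvert]; exact fe.symm_apply_apply _
  have hblk_eq : ∀ (i : Fin r) (b : Finset (Fin r)), b ∈ D i → blk (vert i b) = b := by
    intro i b h
    have h2 := hsymm_vert i b
    show ((σ (fe.symm (vert i b)).1).symm (fe.symm (vert i b)).2 : _).1 = b
    rw [h2]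
    show ((σ i).symm (idx i b) : _).1 = b
    rw [hidx]
    simp only [dif_pos h, Equiv.symm_apply_apply]
  have hblk_mem : ∀ v, blk v ∈ D (fe.symm v).1 := by
    intro v
    rw [hblk]
    exact ((σ (fe.symm v).1).symm (fe.symm v).2).2
  have hrecover : ∀ v, v = vert (fe.symm v).1 (blk v) := by
    intro v
    have h1 : idx (fe.symm v).1 (blk v) = (fe.symm v).2 := by
      rw [hidx]
      simp only [dif_pos (hblk_mem v)]
      have h3 : (⟨blk v, hblk_mem v⟩ : {x // x ∈ D (fe.symm v).1}) =
          (σ (fe.symm v).1).symm (fe.symm v).2 := Subtype.ext rfl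
      rw [h3, Equiv.apply_symm_apply]
    show v = fe ((fe.symm v).1, idx (fe.symm v).1 (blk v))
    rw [h1]
    exact (fe.apply_symm_apply v).symm
  set GE : Finset (Finset (Fin (r * k))) :=
    B.biUnion (fun b => (b.powersetCard m).image (fun S => S.image (fun i => vert i b)))
    with hGE
  have hGE_mem : ∀ e, e ∈ GE ↔ ∃ b ∈ B, ∃ S, S ⊆ b ∧ S.card = m ∧
      e = S.image (fun i => vert i b) := by
    intro e
    simp only [hGE, Finset.mem_biUnion, Finset.mem_image, Finset.mem_powersetCard]
    constructor
    · rintro ⟨b, hb, S, ⟨hSb, hSc⟩, he⟩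
      exact ⟨b, hb, S, hSb, hSc, he.symm⟩
    · rintro ⟨b, hb, S, hSb, hSc, he⟩
      exact ⟨b, hb, S, ⟨hSb, hSc⟩, he.symm⟩
  -- uniformity
  have hGEuni : IsUniform m GE := by
    intro e he
    obtain ⟨b, _, S, _, hSc, he⟩ := (hGE_mem e).mp he
    rw [he, Finset.card_image_of_injective S (hvinj b), hSc]
  -- H-freeness
  have hfree : ∀ H ∈ ℋ, ¬ HypContains H.2 GE := by
    rintro H hH ⟨f, hfinj, hf⟩
    have hnt : t < H.1 := hcard H hH
    -- any two vertices map into the same block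
    have hstep : ∀ x y : Fin H.1, (∃ e ∈ H.2, x ∈ e ∧ y ∈ e) →
        blk (f x) = blk (f y) := by
      rintro x y ⟨e, he, hx, hy⟩
      obtain ⟨b, hbB, S, hSb, hSc, hei⟩ := (hGE_mem _).mp (hf e he)
      have hbx : ∀ z, z ∈ e → blk (f z) = b := by
        intro z hz
        have : f z ∈ e.image f := Finset.mem_image_of_mem f hz
        rw [hei] at this
        obtain ⟨i, hiS, hiv⟩ := Finset.mem_image.mp this
        rw [← hiv]
        exact hblk_eq i b (Finset.mem_filter.mpr ⟨hbB, hSb hiS⟩)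
      rw [hbx x hx, hbx y hy]
    have u0 : Fin H.1 := ⟨0, by omega⟩
    have hsame : ∀ u : Fin H.1, blk (f u) = blk (f u0) := by
      intro u
      have hrel := hconn H hH u u0
      induction hrel with
      | refl => rfl
      | tail _ hstep' ih => exact ih.trans (hstep _ _ hstep')
    set b0 := blk (f u0) with hb0
    have hb0B : b0 ∈ B := (Finset.mem_filter.mp (hblk_mem (f u0))).1
    have hb0card : b0.card = t := hBt b0 hb0B
    -- every f u lies in the image of b0
    have himg : (Finset.univ : Finset (Fin H.1)).image f ⊆
        b0.image (fun i => vert i b0) := by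
      intro v hv
      obtain ⟨u, -, hu⟩ := Finset.mem_image.mp hv
      have h1 : blk (f u) = b0 := hsame u
      have h2 : (fe.symm (f u)).1 ∈ b0 := by
        have := hblk_mem (f u)
        rw [h1] at this
        exact (Finset.mem_filter.mp this).2
      refine Finset.mem_image.mpr ⟨(fe.symm (f u)).1, h2, ?_⟩
      rw [← hu]
      have := hrecover (f u)
      rw [h1] at this
      exact this.symm
    have hle : H.1 ≤ t := by
      calc H.1 = ((Finset.univ : Finset (Fin H.1)).image f).card := by
            rw [Finset.card_image_of_injective _ hfinj, Finset.card_univ, Fintype.card_fin]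
        _ ≤ (b0.image (fun i => vert i b0)).card := Finset.card_le_card himg
        _ ≤ b0.card := Finset.card_image_le
        _ = t := hb0card
    omega
  -- (r,k)-property
  have hrk : IsRKHyper GE m r k := by
    refine ⟨fun i => (Finset.univ : Finset (Fin k)).image (fun j => fe (i, j)), ?_, ?_, ?_⟩
    · intro v
      refine ⟨(fe.symm v).1, ?_, ?_⟩
      · exact Finset.mem_image.mpr ⟨(fe.symm v).2, Finset.mem_univ _, fe.apply_symm_apply v⟩
      · intro i hi
        obtain ⟨j, -, hj⟩ := Finset.mem_image.mp hi
        rw [← hj, fe.symm_apply_apply]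
    · intro i
      rw [Finset.card_image_of_injective _ (fun a b h => by
        have := fe.injective h; exact ((Prod.mk.injEq _ _ _ _).mp this).2),
        Finset.card_univ, Fintype.card_fin]
    · intro S hScard
      obtain ⟨b, ⟨hbB, hSb⟩, -⟩ := hBu S hScard
      refine ⟨S.image (fun i => vert i b), (hGE_mem _).mpr ⟨b, hbB, S, hSb, hScard, rfl⟩, ?_⟩
      intro i hiS
      have : S.image (fun i => vert i b) ∩
          (Finset.univ : Finset (Fin k)).image (fun j => fe (i, j)) = {vert i b} := by
        ext v
        simp only [Finset.mem_inter, Finset.mem_image, Finset.mem_singleton]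
        constructor
        · rintro ⟨⟨i', hi'S, hi'v⟩, ⟨j, -, hjv⟩⟩
          have e1 : fe (i', idx i' b) = v := hi'v
          have e2 : (i', idx i' b) = (i, j) := fe.injective (e1.trans hjv.symm)
          have hii : i' = i := ((Prod.mk.injEq _ _ _ _).mp e2).1
          rw [← hi'v, hii]
        · intro hv
          exact ⟨⟨i, hiS, hv.symm⟩, ⟨idx i b, Finset.mem_univ _, hv.symm⟩⟩
      rw [this, Finset.card_singleton]
  -- conclude
  have hkmem : k ∈ {k | ∃ (N : ℕ) (GE : Finset (Finset (Fin N))),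
      IsUniform m GE ∧ (∀ H ∈ ℋ, ¬ HypContains H.2 GE) ∧ IsRKHyper GE m r k} :=
    ⟨r * k, GE, hGEuni, hfree, hrk⟩
  have hfle : fHyper m r ℋ ≤ k := Nat.sInf_le hkmem
  have hctR : (0 : ℝ) < ((t-1).choose (m-1) : ℝ) := by exact_mod_cast hct
  have hkeq : (k : ℝ) * ((t-1).choose (m-1) : ℝ) = ((r-1).choose (m-1) : ℝ) := by
    have h := design_deg m t r hm B hBt hBu ⟨0, hrpos⟩
    rw [hdeg ⟨0, hrpos⟩] at h
    exact_mod_cast h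
  calc (fHyper m r ℋ : ℝ) ≤ (k : ℝ) := by exact_mod_cast hfle
    _ = ((r-1).choose (m-1) : ℝ) / ((t-1).choose (m-1) : ℝ) := by
        rw [eq_div_iff (ne_of_gt hctR)]; exact hkeq
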